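/- Separation theorem for singular ODEs: let q̄ : (0,T) → ℝ be continuous and let ū, v̄ : (0,T) → ℝ be linearly independent solutions of w'' + q̄·w = 0 such that v̄ has a finite nonzero limit at t = 0, ū tends to 0 at t = 0, and ū(t₂) = 0 for some t₂ ∈ (0,T) with ū ≠ 0 on (0,t₂). Then v̄ has at least one zero in (0,t₂). -/

import Mathlib

/-- Separation theorem for singular second-order ODEs: if `ū, v̄` are linearly
independent solutions of `w'' + q̄ w = 0` on `(0,T)`, `v̄` has a finite nonzero limit at
`0`, `ū → 0` at `0` and `ū(t₂) = 0` with `ū ≠ 0` on `(0,t₂)`, then `v̄` vanishes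
somewhere in `(0,t₂)`. -/
theorem separation_singular (T : ℝ) (hT : 0 < T) (qb ub vb : ℝ → ℝ)
    (hqb : ContinuousOn qb (Set.Ioo 0 T))
    (hub : ContDiffOn ℝ 2 ub (Set.Ioo 0 T))
    (hvb : ContDiffOn ℝ 2 vb (Set.Ioo 0 T))
    (hodeu : ∀ t ∈ Set.Ioo 0 T, deriv (deriv ub) t + qb t * ub t = 0)
    (hodev : ∀ t ∈ Set.Ioo 0 T, deriv (deriv vb) t + qb t * vb t = 0)
    (hW : ∀ t ∈ Set.Ioo 0 T, ub t * deriv vb t - vb t * deriv ub t ≠ 0)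
    (L : ℝ) (hL : L ≠ 0)
    (hvlim : Filter.Tendsto vb (nhdsWithin 0 (Set.Ioi 0)) (nhds L))
    (hulim : Filter.Tendsto ub (nhdsWithin 0 (Set.Ioi 0)) (nhds 0))
    (t₂ : ℝ) (ht₂ : t₂ ∈ Set.Ioo 0 T) (hz : ub t₂ = 0)
    (hnz : ∀ t ∈ Set.Ioo 0 t₂, ub t ≠ 0) :
    ∃ t ∈ Set.Ioo 0 t₂, vb t = 0 := by
  by_contra hcon
  push_neg at hcon
  obtain ⟨ht₂0, ht₂T⟩ := ht₂
  have hopen : IsOpen (Set.Ioo (0:ℝ) T) := isOpen_Ioo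
  have hsub : Set.Ioc 0 t₂ ⊆ Set.Ioo 0 T := fun t ht => ⟨ht.1, lt_of_le_of_lt ht.2 ht₂T⟩
  have hsub' : Set.Ioo 0 t₂ ⊆ Set.Ioo 0 T := fun t ht => ⟨ht.1, ht.2.trans ht₂T⟩
  -- vb t₂ ≠ 0
  have hvt₂ : vb t₂ ≠ 0 := by
    intro h
    apply hW t₂ ⟨ht₂0, ht₂T⟩
    rw [hz, h]; ring
  have hvne : ∀ t ∈ Set.Ioc 0 t₂, vb t ≠ 0 := by
    intro t ht
    rcases eq_or_lt_of_le ht.2 with h | h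
    · rw [h]; exact hvt₂
    · exact hcon t ⟨ht.1, h⟩
  -- differentiability facts
  have hub1 : ContDiffOn ℝ 1 (deriv ub) (Set.Ioo 0 T) := hub.deriv_of_isOpen hopen (by norm_num)
  have hvb1 : ContDiffOn ℝ 1 (deriv vb) (Set.Ioo 0 T) := hvb.deriv_of_isOpen hopen (by norm_num)
  have hdu : ∀ t ∈ Set.Ioo 0 T, DifferentiableAt ℝ ub t := fun t ht =>
    (hub.differentiableOn (by norm_num)).differentiableAt (hopen.mem_nhds ht)
  have hdv : ∀ t ∈ Set.Ioo 0 T, DifferentiableAt ℝ vb t := fun t ht =>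
    (hvb.differentiableOn (by norm_num)).differentiableAt (hopen.mem_nhds ht)
  set W : ℝ → ℝ := fun t => ub t * deriv vb t - vb t * deriv ub t with hWdef
  have hWc : ContinuousOn W (Set.Ioo 0 T) :=
    (hub.continuousOn.mul hvb1.continuousOn).sub (hvb.continuousOn.mul hub1.continuousOn)
  -- constant sign of W
  have hsign : (∀ t ∈ Set.Ioo 0 T, 0 < W t) ∨ (∀ t ∈ Set.Ioo 0 T, W t < 0) := by
    by_contra h
    push_neg at h
    obtain ⟨⟨a, ha, ha'⟩, ⟨b, hb, hb'⟩⟩ := h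
    have hWa : W a < 0 := ha'.lt_of_ne (hW a ha)
    have hWb : 0 < W b := hb'.lt_of_ne (Ne.symm (hW b hb))
    have hpre : IsPreconnected (W '' Set.Ioo 0 T) := isPreconnected_Ioo.image W hWc
    have hoc : Set.OrdConnected (W '' Set.Ioo 0 T) := hpre.ordConnected
    have h0 : (0:ℝ) ∈ W '' Set.Ioo 0 T :=
      hoc.out ⟨a, ha, rfl⟩ ⟨b, hb, rfl⟩ ⟨hWa.le, hWb.le⟩
    obtain ⟨t, ht, h0⟩ := h0
    exact hW t ht h0
  -- the quotient g = ub / vb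
  set g : ℝ → ℝ := fun t => ub t / vb t with hgdef
  have hgd : ∀ t ∈ Set.Ioo 0 t₂,
      HasDerivAt g ((deriv ub t * vb t - ub t * deriv vb t) / vb t ^ 2) t := by
    intro t ht
    have htT := hsub' ht
    exact ((hdu t htT).hasDerivAt).div ((hdv t htT).hasDerivAt) (hcon t ht)
  have hgc : ContinuousOn g (Set.Ioc 0 t₂) :=
    ((hub.continuousOn.mono hsub).div (hvb.continuousOn.mono hsub) hvne)
  have hgt₂ : g t₂ = 0 := by simp [hgdef, hz]
  -- g tends to 0 at 0⁺
  have hglim : Filter.Tendsto g (nhdsWithin 0 (Set.Ioi 0)) (nhds 0) := by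
    have := hulim.div hvlim hL
    rw [zero_div] at this
    exact this
  -- pick the midpoint s
  set s : ℝ := t₂ / 2 with hsdef
  have hs : s ∈ Set.Ioo 0 t₂ := ⟨by positivity, by linarith⟩
  have hgs : g s ≠ 0 := div_ne_zero (hnz s hs) (hcon s hs)
  -- key monotonicity claim
  have key : ∀ t ∈ Set.Ioo 0 s, |g s| < |g t| := by
    rcases hsign with hpos | hneg
    · -- W > 0 : g strictly antitone on Ioc 0 t₂
      have hanti : StrictAntiOn g (Set.Ioc 0 t₂) := by
        apply strictAntiOn_of_deriv_neg (convex_Ioc 0 t₂) hgc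
        intro t ht
        rw [interior_Ioc] at ht
        rw [(hgd t ht).deriv]
        have hWt : 0 < W t := hpos t (hsub' ht)
        have hv2 : 0 < vb t ^ 2 := pow_two_pos_of_ne_zero (hcon t ht)
        apply div_neg_of_neg_of_pos _ hv2
        have : deriv ub t * vb t - ub t * deriv vb t = -W t := by simp [hWdef]; ring
        rw [this]; linarith
      have hgs0 : 0 < g s := by
        have := hanti ⟨hs.1, hs.2.le⟩ ⟨ht₂0, le_refl _⟩ hs.2
        rwa [hgt₂] at this
      intro t ht
      have hgts : g s < g t := hanti ⟨ht.1, (ht.2.trans hs.2).le⟩ ⟨hs.1, hs.2.le⟩ ht.2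
      rw [abs_of_pos hgs0, abs_of_pos (hgs0.trans hgts)]
      exact hgts
    · -- W < 0 : g strictly monotone on Ioc 0 t₂
      have hmono : StrictMonoOn g (Set.Ioc 0 t₂) := by
        apply strictMonoOn_of_deriv_pos (convex_Ioc 0 t₂) hgc
        intro t ht
        rw [interior_Ioc] at ht
        rw [(hgd t ht).deriv]
        have hWt : W t < 0 := hneg t (hsub' ht)
        have hv2 : 0 < vb t ^ 2 := pow_two_pos_of_ne_zero (hcon t ht)
        apply div_pos _ hv2
        have : deriv ub t * vb t - ub t * deriv vb t = -W t := by simp [hWdef]; ring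
        rw [this]; linarith
      have hgs0 : g s < 0 := by
        have := hmono ⟨hs.1, hs.2.le⟩ ⟨ht₂0, le_refl _⟩ hs.2
        rwa [hgt₂] at this
      intro t ht
      have hgts : g t < g s := hmono ⟨ht.1, (ht.2.trans hs.2).le⟩ ⟨hs.1, hs.2.le⟩ ht.2
      rw [abs_of_neg hgs0, abs_of_neg (hgts.trans hgs0)]
      linarith
  -- contradiction with the limit
  have habs : Filter.Tendsto (fun t => |g t|) (nhdsWithin 0 (Set.Ioi 0)) (nhds 0) := by
    have := hglim.abs
    simpa using this
  have hpos : 0 < |g s| := abs_pos.mpr hgs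
  have E1 : ∀ᶠ t in nhdsWithin 0 (Set.Ioi 0), |g t| < |g s| :=
    habs.eventually_lt_const hpos
  have E2 : ∀ᶠ t in nhdsWithin 0 (Set.Ioi 0), t < s :=
    Filter.eventually_of_mem (nhdsWithin_le_nhds (Iio_mem_nhds hs.1)) (fun t ht => ht)
  have E3 : ∀ᶠ t in nhdsWithin 0 (Set.Ioi 0), (0:ℝ) < t :=
    Filter.eventually_of_mem self_mem_nhdsWithin (fun t ht => ht)
  obtain ⟨t, h1, h2, h3⟩ := (E1.and (E2.and E3)).exists
  exact absurd (key t ⟨h3, h2⟩) (not_lt.mpr h1.le)
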